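/- On X = F(V), the intersection numbers of the classes H = c_1(U*)|_X and Δ = c_2(U*)|_X are: H^4 = 108, H^2·Δ = 45, and Δ^2 = 27. -/
import Mathlib


/-
STATEMENT 7: On the variety of lines `X = F(V)` of a smooth cubic fourfold
`V ⊂ P⁵`, with `H = c₁(U*)|_X` the Plücker hyperplane class and
`Δ = c₂(U*)|_X` the class of lines in a fixed hyperplane, the intersection
numbers are `H⁴ = 108`, `H²·Δ = 45`, `Δ² = 27`.

We model the (even) cohomology ring of the Grassmannian `G(1,5)` abstractly:
`σ₁ = c₁(U*)`, `σ₂ = c₂(U*)` are the Schubert classes, `deg` is integration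
over `G(1,5)` and `[X] = c₄(S³U*) = 9σ₂(2σ₁² + σ₂)`.  Intersection numbers on
`X` are `deg (α · [X])`.  The context facts are the degrees of the
sub-Grassmannians: `deg(σ₁⁶σ₂) = deg G(1,4) = 5`, `deg(σ₁⁴σ₂²) = deg G(1,3) = 2`,
`deg(σ₁²σ₂³) = 1`, `deg(σ₂⁴) = 1`.
-/
structure GrassmannianCohomology where
  /-- the even cohomology ring `H^*(G(1,5), ℚ)` -/
  A : Type*
  [commRing : CommRing A]
  [alg : Algebra ℚ A]
  /-- the Schubert class `σ₁ = c₁(U*)` (lines meeting a fixed `P³`) -/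
  σ₁ : A
  /-- the Schubert class `σ₂ = c₂(U*)` (lines inside a fixed hyperplane) -/
  σ₂ : A
  /-- integration over the 8-dimensional Grassmannian `G(1,5)` -/
  deg : A →ₗ[ℚ] ℚ
  /-- `deg (σ₁⁶ σ₂) = deg G(1,4) = 5` -/
  hG14 : deg (σ₁ ^ 6 * σ₂) = 5
  /-- `deg (σ₁⁴ σ₂²) = deg G(1,3) = 2` -/
  hG13 : deg (σ₁ ^ 4 * σ₂ ^ 2) = 2
  /-- `deg (σ₁² σ₂³) = deg G(1,2) = 1` -/
  hG12 : deg (σ₁ ^ 2 * σ₂ ^ 3) = 1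
  /-- `deg (σ₂⁴) = 1` -/
  hG11 : deg (σ₂ ^ 4) = 1

attribute [instance] GrassmannianCohomology.commRing GrassmannianCohomology.alg

/-- `H⁴ = 108`, `H²Δ = 45`, `Δ² = 27` on `X = F(V)`, where the intersection
number of a class `α` of `G(1,5)` restricted to `X` is `deg (α · [X])` with
`[X] = c₄(S³U*) = 9σ₂(2σ₁² + σ₂)`, `H = σ₁|_X` and `Δ = σ₂|_X`. -/
theorem intersection_numbers_on_F_V (G : GrassmannianCohomology)
    (Xcls : G.A) (hX : Xcls = 9 * G.σ₂ * (2 * G.σ₁ ^ 2 + G.σ₂)) :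
    G.deg (G.σ₁ ^ 4 * Xcls) = 108 ∧
    G.deg (G.σ₁ ^ 2 * G.σ₂ * Xcls) = 45 ∧
    G.deg (G.σ₂ ^ 2 * Xcls) = 27 := by
  subst hX
  refine ⟨?_, ?_, ?_⟩
  · have h : G.σ₁ ^ 4 * (9 * G.σ₂ * (2 * G.σ₁ ^ 2 + G.σ₂)) =
        (18 : ℕ) • (G.σ₁ ^ 6 * G.σ₂) + (9 : ℕ) • (G.σ₁ ^ 4 * G.σ₂ ^ 2) := by
      simp [nsmul_eq_mul]; ring
    rw [h, map_add, map_nsmul, map_nsmul, G.hG14, G.hG13]; norm_num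
  · have h : G.σ₁ ^ 2 * G.σ₂ * (9 * G.σ₂ * (2 * G.σ₁ ^ 2 + G.σ₂)) =
        (18 : ℕ) • (G.σ₁ ^ 4 * G.σ₂ ^ 2) + (9 : ℕ) • (G.σ₁ ^ 2 * G.σ₂ ^ 3) := by
      simp [nsmul_eq_mul]; ring
    rw [h, map_add, map_nsmul, map_nsmul, G.hG13, G.hG12]; norm_num
  · have h : G.σ₂ ^ 2 * (9 * G.σ₂ * (2 * G.σ₁ ^ 2 + G.σ₂)) =
        (18 : ℕ) • (G.σ₁ ^ 2 * G.σ₂ ^ 3) + (9 : ℕ) • (G.σ₂ ^ 4) := by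
      simp [nsmul_eq_mul]; ring
    rw [h, map_add, map_nsmul, map_nsmul, G.hG12, G.hG11]; norm_num
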